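/- Let λ > 0 and g₁, g₂ ∈ ℝ. For h > 0 let Ψ_h(R) = A_h·e^(√λ·R) + B_h·e^(−√λ·R) with A_h = (g₂ − g₁·e^(−√λ·h))/(2·sinh(√λ·h)) and B_h = (−g₂ + g₁·e^(√λ·h))/(2·sinh(√λ·h)). Then there exists C > 0 (depending only on λ, g₁, g₂) such that for all h with 0 < h ≤ 1, one has |Ψ_h'(h) − (g₂ − g₁)/h| ≤ C·h. -/

import Mathlib

open Real Set

private lemma aux_nonneg {T : ℝ} {f f' : ℝ → ℝ} (hf : ∀ x, HasDerivAt f (f' x) x)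
    (h0 : f 0 = 0) (h' : ∀ x ∈ Icc (0:ℝ) T, 0 ≤ f' x) :
    ∀ x ∈ Icc (0:ℝ) T, 0 ≤ f x := by
  intro x hx
  have hmono : MonotoneOn f (Icc (0:ℝ) T) := by
    apply monotoneOn_of_deriv_nonneg (convex_Icc 0 T)
    · exact fun y _ => ((hf y).continuousAt).continuousWithinAt
    · exact fun y _ => ((hf y).differentiableAt).differentiableWithinAt
    · intro y hy
      rw [(hf y).deriv]
      exact h' y (interior_subset hy)
  have h0T : (0:ℝ) ∈ Icc (0:ℝ) T := ⟨le_refl 0, le_trans hx.1 hx.2⟩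
  have := hmono h0T hx hx.1
  rwa [h0] at this

private lemma sinh_le_mul_cosh {x : ℝ} (hx : 0 ≤ x) : Real.sinh x ≤ x * Real.cosh x := by
  have key : ∀ y ∈ Icc (0:ℝ) x, 0 ≤ y * Real.cosh y - Real.sinh y := by
    apply aux_nonneg (f' := fun y => y * Real.sinh y)
    · intro y
      have h1 : HasDerivAt (fun y : ℝ => y * Real.cosh y)
          (1 * Real.cosh y + y * Real.sinh y) y :=
        (hasDerivAt_id y).mul (Real.hasDerivAt_cosh y)
      have := h1.sub (Real.hasDerivAt_sinh y)
      exact this.congr_deriv (by beta_reduce; ring)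
    · simp
    · intro y hy
      exact mul_nonneg hy.1 (Real.sinh_nonneg_iff.mpr hy.1)
  have := key x ⟨hx, le_refl x⟩
  linarith

private lemma cosh_sub_one_le {T x : ℝ} (hx : x ∈ Icc (0:ℝ) T) :
    Real.cosh x - 1 ≤ x ^ 2 * Real.cosh T := by
  have key : ∀ y ∈ Icc (0:ℝ) T, 0 ≤ y ^ 2 * Real.cosh T - Real.cosh y + 1 := by
    apply aux_nonneg (f' := fun y => 2 * y * Real.cosh T - Real.sinh y)
    · intro y
      have h1 : HasDerivAt (fun y : ℝ => y ^ 2 * Real.cosh T)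
          (2 * y ^ 1 * Real.cosh T) y := by
        simpa using (hasDerivAt_pow 2 y).mul_const (Real.cosh T)
      have := (h1.sub (Real.hasDerivAt_cosh y)).add_const 1
      exact this.congr_deriv (by beta_reduce; ring)
    · simp
    · intro y hy
      have h1 : Real.sinh y ≤ y * Real.cosh y := sinh_le_mul_cosh hy.1
      have h2 : Real.cosh y ≤ Real.cosh T := by
        rw [Real.cosh_le_cosh]
        rw [abs_of_nonneg hy.1, abs_of_nonneg (le_trans hy.1 hy.2)]
        exact hy.2
      nlinarith [Real.cosh_pos y, hy.1]
  have := key x hx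
  linarith

private lemma sinh_sub_self_le {T x : ℝ} (hx : x ∈ Icc (0:ℝ) T) :
    Real.sinh x - x ≤ x ^ 3 * Real.cosh T := by
  have key : ∀ y ∈ Icc (0:ℝ) T, 0 ≤ y ^ 3 * Real.cosh T - Real.sinh y + y := by
    apply aux_nonneg (f' := fun y => 3 * y ^ 2 * Real.cosh T - Real.cosh y + 1)
    · intro y
      have h1 : HasDerivAt (fun y : ℝ => y ^ 3 * Real.cosh T)
          (3 * y ^ 2 * Real.cosh T) y := by
        simpa using (hasDerivAt_pow 3 y).mul_const (Real.cosh T)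
      have := (h1.sub (Real.hasDerivAt_sinh y)).add (hasDerivAt_id y)
      exact this.congr_deriv (by beta_reduce; ring)
    · simp
    · intro y hy
      have h2 : Real.cosh y - 1 ≤ y ^ 2 * Real.cosh T := cosh_sub_one_le hy
      nlinarith [Real.cosh_pos (T : ℝ), sq_nonneg y]
  have := key x hx
  linarith

private lemma mul_cosh_sub_sinh_le {T x : ℝ} (hx : x ∈ Icc (0:ℝ) T) :
    x * Real.cosh x - Real.sinh x ≤ x ^ 3 * Real.cosh T := by
  have key : ∀ y ∈ Icc (0:ℝ) T, 0 ≤ y ^ 3 * Real.cosh T - y * Real.cosh y + Real.sinh y := by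
    apply aux_nonneg (f' := fun y => 3 * y ^ 2 * Real.cosh T - y * Real.sinh y)
    · intro y
      have h1 : HasDerivAt (fun y : ℝ => y ^ 3 * Real.cosh T)
          (3 * y ^ 2 * Real.cosh T) y := by
        simpa using (hasDerivAt_pow 3 y).mul_const (Real.cosh T)
      have h2 : HasDerivAt (fun y : ℝ => y * Real.cosh y)
          (1 * Real.cosh y + y * Real.sinh y) y :=
        (hasDerivAt_id y).mul (Real.hasDerivAt_cosh y)
      have := (h1.sub h2).add (Real.hasDerivAt_sinh y)
      exact this.congr_deriv (by beta_reduce; ring)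
    · simp
    · intro y hy
      have h1 : Real.sinh y ≤ y * Real.cosh y := sinh_le_mul_cosh hy.1
      have h2 : Real.cosh y ≤ Real.cosh T := by
        rw [Real.cosh_le_cosh]
        rw [abs_of_nonneg hy.1, abs_of_nonneg (le_trans hy.1 hy.2)]
        exact hy.2
      nlinarith [Real.cosh_pos y, hy.1]
  have := key x hx
  linarith

/-- mode-wise form of (3.9): Ψ_h'(h) ≈ (g₂ - g₁)/h up to O(h). -/
theorem stmt_6 (lam g1 g2 : ℝ) (hlam : 0 < lam)
    (Psi : ℝ → ℝ → ℝ)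
    (hPsi : ∀ h R : ℝ, Psi h R =
      (g2 - g1 * Real.exp (-(Real.sqrt lam * h))) / (2 * Real.sinh (Real.sqrt lam * h)) *
        Real.exp (Real.sqrt lam * R)
      + (-g2 + g1 * Real.exp (Real.sqrt lam * h)) / (2 * Real.sinh (Real.sqrt lam * h)) *
        Real.exp (-(Real.sqrt lam * R))) :
    ∃ C > 0, ∀ h : ℝ, 0 < h → h ≤ 1 →
      |deriv (Psi h) h - (g2 - g1) / h| ≤ C * h := by
  set s := Real.sqrt lam with hs_def
  have hs : 0 < s := Real.sqrt_pos.mpr hlam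
  refine ⟨(|g1| + |g2|) * Real.cosh s * s ^ 2 + 1, by positivity, ?_⟩
  intro h hh hh1
  set t := s * h with ht_def
  have ht : 0 < t := mul_pos hs hh
  have htle : t ≤ s := by
    calc t = s * h := rfl
    _ ≤ s * 1 := by nlinarith
    _ = s := mul_one s
  have hsinht : 0 < Real.sinh t := Real.sinh_pos_iff.mpr ht
  have htsinh : t ≤ Real.sinh t := Real.self_le_sinh_iff.mpr ht.le
  -- compute the derivative
  set A := (g2 - g1 * Real.exp (-(s * h))) / (2 * Real.sinh (s * h)) with hA
  set B := (-g2 + g1 * Real.exp (s * h)) / (2 * Real.sinh (s * h)) with hB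
  have hfun : Psi h = fun R => A * Real.exp (s * R) + B * Real.exp (-(s * R)) := by
    funext R; rw [hPsi h R]
  have hD1 : HasDerivAt (fun R : ℝ => s * R) s h := by
    simpa using (hasDerivAt_id h).const_mul s
  have hD : HasDerivAt (Psi h)
      (A * (Real.exp (s * h) * s) + B * (Real.exp (-(s * h)) * (-s))) h := by
    rw [hfun]
    exact ((hD1.exp).const_mul A).add (((hD1.neg).exp).const_mul B)
  rw [hD.deriv]
  -- simplify the derivative value
  have hval : A * (Real.exp (s * h) * s) + B * (Real.exp (-(s * h)) * (-s))
      = s * (g2 * Real.cosh (s * h) - g1) / Real.sinh (s * h) := by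
    rw [hA, hB]
    have hsinhsh : 0 < Real.sinh (s * h) := by rw [← ht_def]; exact hsinht
    have hE : Real.exp (s * h) ≠ 0 := Real.exp_ne_zero _
    have hEI : Real.exp (-(s * h)) = (Real.exp (s * h))⁻¹ := Real.exp_neg _
    have h1 : Real.exp (s * h) ^ 2 - 1 ≠ 0 := by
      have hne : Real.exp (s * h) - (Real.exp (s * h))⁻¹ ≠ 0 := by
        rw [Real.sinh_eq, hEI] at hsinhsh
        intro hc; rw [hc] at hsinhsh; simp at hsinhsh
      intro hc
      apply hne
      field_simp
      linarith [hc]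
    have h2 : -(Real.exp (s * h) * 2) + Real.exp (s * h) ^ 3 * 2 ≠ 0 := by
      have he : -(Real.exp (s * h) * 2) + Real.exp (s * h) ^ 3 * 2
          = 2 * Real.exp (s * h) * (Real.exp (s * h) ^ 2 - 1) := by ring
      rw [he]
      exact mul_ne_zero (mul_ne_zero two_ne_zero hE) h1
    have h3 : -1 + Real.exp (s * h) ^ 2 ≠ 0 := by
      intro hc; apply h1; linarith
    have h4 : Real.exp (s * h) * Real.exp (s * h) - 1 ≠ 0 := by
      intro hc; apply h1; rw [pow_two]; linarith
    have hsne : Real.sinh (s * h) ≠ 0 := ne_of_gt hsinhsh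
    rw [Real.cosh_eq, Real.sinh_eq, hEI]
    field_simp
    ring
  rw [hval, ← ht_def]
  -- rewrite difference
  have hkey : s * (g2 * Real.cosh t - g1) / Real.sinh t - (g2 - g1) / h
      = (g2 * (t * Real.cosh t - Real.sinh t) + g1 * (Real.sinh t - t)) / (h * Real.sinh t) := by
    rw [ht_def]
    field_simp
    ring
  rw [hkey]
  -- bounds
  have hxIcc : t ∈ Icc (0:ℝ) s := ⟨ht.le, htle⟩
  have hb1 : t * Real.cosh t - Real.sinh t ≤ t ^ 3 * Real.cosh s := mul_cosh_sub_sinh_le hxIcc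
  have hb1' : 0 ≤ t * Real.cosh t - Real.sinh t := by
    have := sinh_le_mul_cosh ht.le; linarith
  have hb2 : Real.sinh t - t ≤ t ^ 3 * Real.cosh s := sinh_sub_self_le hxIcc
  have hb2' : 0 ≤ Real.sinh t - t := by linarith
  have hnum : |g2 * (t * Real.cosh t - Real.sinh t) + g1 * (Real.sinh t - t)|
      ≤ (|g1| + |g2|) * (t ^ 3 * Real.cosh s) := by
    calc |g2 * (t * Real.cosh t - Real.sinh t) + g1 * (Real.sinh t - t)|
        ≤ |g2 * (t * Real.cosh t - Real.sinh t)| + |g1 * (Real.sinh t - t)| := abs_add_le _ _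
      _ = |g2| * (t * Real.cosh t - Real.sinh t) + |g1| * (Real.sinh t - t) := by
          rw [abs_mul, abs_mul, abs_of_nonneg hb1', abs_of_nonneg hb2']
      _ ≤ |g2| * (t ^ 3 * Real.cosh s) + |g1| * (t ^ 3 * Real.cosh s) := by
          have e1 := mul_le_mul_of_nonneg_left hb1 (abs_nonneg g2)
          have e2 := mul_le_mul_of_nonneg_left hb2 (abs_nonneg g1)
          linarith
      _ = (|g1| + |g2|) * (t ^ 3 * Real.cosh s) := by ring
  have hden : 0 < h * t := mul_pos hh ht
  have hdenle : h * t ≤ h * Real.sinh t := by nlinarith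
  have habs : |(g2 * (t * Real.cosh t - Real.sinh t) + g1 * (Real.sinh t - t)) / (h * Real.sinh t)|
      ≤ (|g1| + |g2|) * (t ^ 3 * Real.cosh s) / (h * t) := by
    rw [abs_div, abs_of_pos (lt_of_lt_of_le hden hdenle)]
    exact div_le_div₀ (by positivity) hnum hden hdenle
  refine le_trans habs ?_
  have heq : (|g1| + |g2|) * (t ^ 3 * Real.cosh s) / (h * t)
      = (|g1| + |g2|) * Real.cosh s * s ^ 2 * h := by
    rw [ht_def]
    field_simp
  rw [heq]
  nlinarith [abs_nonneg g1, abs_nonneg g2, Real.cosh_pos s, sq_nonneg s]
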